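/- Let Ω be a graded poset of rank n-2 on the set {1,...,m}, and let Ω⁰ be Ω with a minimum element 0 adjoined. For 1 ≤ i ≤ n let v_i be the characteristic vector of the order ideal of elements of Ω⁰ of rank at most i-1. Then v_1,...,v_n are vertices of the order polytope O(Ω), and each facet of O(Ω) contains exactly n-1 of the vectors v_1,...,v_n, i.e., they span a special simplex in O(Ω). -/

import Mathlib

/-- The dimension of a subset of `ι → ℝ`, as the rank of its vector span. -/
noncomputable def pdim {ι : Type*} (S : Set (ι → ℝ)) : ℕ :=
  Module.finrank ℝ (vectorSpan ℝ S)

/-- `F` is a face of the polytope `P`. -/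
def IsFaceOf {ι : Type*} (F P : Set (ι → ℝ)) : Prop :=
  F = P ∨ ∃ (f : (ι → ℝ) →ₗ[ℝ] ℝ) (c : ℝ), (∀ x ∈ P, f x ≤ c) ∧ F = {x ∈ P | f x = c}

/-- `F` is a facet of `P`: a nonempty proper face of codimension one. -/
def IsFacetOf {ι : Type*} (F P : Set (ι → ℝ)) : Prop :=
  IsFaceOf F P ∧ F.Nonempty ∧ F ≠ P ∧ pdim F + 1 = pdim P

/-- The order polytope `O(Ω)` of a poset `Ω` (given by the relation `le` on `Fin m`),
inside the hyperplane `x 0 = 1` of `ℝ^{m+1}`: here coordinate `0` corresponds to the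
adjoined minimum element `0` of `Ω⁰`. -/
def orderPolytope (m : ℕ) (le : Fin m → Fin m → Prop) : Set (Fin (m + 1) → ℝ) :=
  {x | x 0 = 1 ∧ (∀ a, 0 ≤ x a) ∧ (∀ j : Fin m, x j.succ ≤ x 0) ∧
    ∀ i j : Fin m, le i j → x j.succ ≤ x i.succ}

/-- The characteristic vector of the order ideal of elements of `Ω⁰` of rank at most `i`
(that is, of rank at most `i - 1` for the 1-based index `i + 1`), where the element `k`
of `Ω` with rank function value `rk k` has rank `rk k + 1` in `Ω⁰` and the adjoined
minimum has rank `0`. -/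
def idealVec (m n : ℕ) (rk : Fin m → ℕ) (i : Fin n) : Fin (m + 1) → ℝ :=
  Fin.cons 1 (fun j => if rk j + 1 ≤ (i : ℕ) then 1 else 0)


open Finset

open scoped Classical in
lemma rk_strict_mono {m : ℕ} (le : Fin m → Fin m → Prop)
    (hrefl : ∀ i, le i i)
    (hantisymm : ∀ i j, le i j → le j i → i = j)
    (htrans : ∀ i j k, le i j → le j k → le i k)
    (rk : Fin m → ℕ)
    (hcov : ∀ i j, le i j → i ≠ j → (∀ c, le i c → le c j → c = i ∨ c = j) →
      rk j = rk i + 1) :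
    ∀ (N : ℕ) (i j : Fin m), (Finset.univ.filter (fun c => le i c ∧ le c j)).card ≤ N →
      le i j → i ≠ j → rk i < rk j := by
  classical
  intro N
  induction N with
  | zero =>
    intro i j hcard hij hne
    exfalso
    have hi : i ∈ Finset.univ.filter (fun c => le i c ∧ le c j) := by
      simp [hrefl i, hij]
    have := Finset.card_pos.mpr ⟨i, hi⟩
    omega
  | succ N ih =>
    intro i j hcard hij hne
    by_cases hcc : ∀ c, le i c → le c j → c = i ∨ c = j
    · have := hcov i j hij hne hcc; omega
    · push_neg at hcc
      obtain ⟨c, hic, hcj, hci, hcj'⟩ := hcc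
      have hsub1 : Finset.univ.filter (fun x => le i x ∧ le x c) ⊂
          Finset.univ.filter (fun x => le i x ∧ le x j) := by
        constructor
        · intro x hx
          simp only [Finset.mem_filter, Finset.mem_univ, true_and] at hx ⊢
          exact ⟨hx.1, htrans x c j hx.2 hcj⟩
        · intro hsub
          have hj : j ∈ Finset.univ.filter (fun x => le i x ∧ le x j) := by
            simp [hij, hrefl j]
          have := hsub hj
          simp only [Finset.mem_filter, Finset.mem_univ, true_and] at this
          exact hcj' (hantisymm c j hcj this.2)
      have hsub2 : Finset.univ.filter (fun x => le c x ∧ le x j) ⊂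
          Finset.univ.filter (fun x => le i x ∧ le x j) := by
        constructor
        · intro x hx
          simp only [Finset.mem_filter, Finset.mem_univ, true_and] at hx ⊢
          exact ⟨htrans i c x hic hx.1, hx.2⟩
        · intro hsub
          have hi : i ∈ Finset.univ.filter (fun x => le i x ∧ le x j) := by
            simp [hij, hrefl i]
          have := hsub hi
          simp only [Finset.mem_filter, Finset.mem_univ, true_and] at this
          exact hci (hantisymm c i this.1 hic)
      have h1 := Finset.card_lt_card hsub1
      have h2 := Finset.card_lt_card hsub2
      have r1 : rk i < rk c := ih i c (by omega) hic (Ne.symm hci)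
      have r2 : rk c < rk j := ih c j (by omega) hcj hcj'
      omega

lemma extreme_of_01 {ι : Type*} (s : Set (ι → ℝ))
    (hbox : ∀ x ∈ s, ∀ t, 0 ≤ x t ∧ x t ≤ 1)
    (v : ι → ℝ) (hvs : v ∈ s) (hv : ∀ t, v t = 0 ∨ v t = 1) :
    v ∈ Set.extremePoints ℝ s := by
  refine ⟨hvs, ?_⟩
  intro x hx y hy hseg
  rw [openSegment] at hseg
  obtain ⟨a, b, ha, hb, hab, hcomb⟩ := hseg
  have key : ∀ t, x t = v t ∧ y t = v t := by
    intro t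
    have h1 := hbox x hx t
    have h2 := hbox y hy t
    have h3 : a * x t + b * y t = v t := by
      have := congrFun hcomb t
      simpa using this
    rcases hv t with h | h <;> rw [h] at h3 ⊢ <;> constructor <;> nlinarith
  exact funext fun t => (key t).1



open Finset

section
variable {m n : ℕ} (le : Fin m → Fin m → Prop)
  (hrefl : ∀ i, le i i)
  (hantisymm : ∀ i j, le i j → le j i → i = j)
  (htrans : ∀ i j k, le i j → le j k → le i k)
  (rk : Fin m → ℕ)
  (hcov : ∀ i j, le i j → i ≠ j → (∀ c, le i c → le c j → c = i ∨ c = j) →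
      rk j = rk i + 1)

-- from t1:
variable (rk_lt : ∀ i j, le i j → i ≠ j → rk i < rk j)

include rk_lt in
lemma rk_mono : ∀ i j, le i j → rk i ≤ rk j := by
  intro i j h
  by_cases hij : i = j
  · subst hij; exact Nat.le_refl _
  · exact Nat.le_of_lt (rk_lt i j h hij)

include hrefl htrans rk_lt in
lemma rk_le_bound (hmax : ∀ i, (∀ j, le i j → j = i) → rk i = n - 2) :
    ∀ i, rk i ≤ n - 2 := by
  classical
  intro i
  have hne : (Finset.univ.filter (fun c => le i c)).Nonempty := ⟨i, by simp [hrefl i]⟩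
  obtain ⟨b, hbmem, hbmax⟩ := Finset.exists_max_image _ rk hne
  simp only [Finset.mem_filter, Finset.mem_univ, true_and] at hbmem
  have hbM : ∀ c, le b c → c = b := by
    intro c hbc
    by_contra hcb
    have h1 : rk b < rk c := rk_lt b c hbc (fun h => hcb h.symm)
    have h2 : rk c ≤ rk b := hbmax c (by simp [htrans i b c hbmem hbc])
    omega
  have := hmax b hbM
  calc rk i ≤ rk b := rk_mono le rk rk_lt i b hbmem
    _ = n - 2 := this

lemma box_of_mem {x : Fin (m+1) → ℝ} (hx : x ∈ orderPolytope m le) :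
    ∀ t, 0 ≤ x t ∧ x t ≤ 1 := by
  obtain ⟨h0, hnn, hle1, hord⟩ := hx
  intro t
  refine ⟨hnn t, ?_⟩
  induction t using Fin.cases with
  | zero => rw [h0]
  | succ j => calc x j.succ ≤ x 0 := hle1 j
                _ = 1 := h0

include rk_lt in
lemma idealVec_mem (k : Fin n) : idealVec m n rk k ∈ orderPolytope m le := by
  refine ⟨by simp [idealVec], ?_, ?_, ?_⟩
  · intro a
    induction a using Fin.cases with
    | zero => simp [idealVec]
    | succ j => simp only [idealVec, Fin.cons_succ]; positivity
  · intro j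
    simp only [idealVec, Fin.cons_succ, Fin.cons_zero]
    split <;> norm_num
  · intro i j hij
    simp only [idealVec, Fin.cons_succ]
    have : rk i ≤ rk j := rk_mono le rk rk_lt i j hij
    split <;> split <;> norm_num <;> omega

end

section
open Finset Module

lemma finrank_ker_surj {ι : Type*} [Fintype ι] {r : ℕ}
    (Φ : (ι → ℝ) →ₗ[ℝ] (Fin r → ℝ)) (h : Function.Surjective Φ) :
    Module.finrank ℝ (LinearMap.ker Φ) + r = Fintype.card ι := by
  have h1 := LinearMap.finrank_range_add_finrank_ker Φ
  rw [LinearMap.range_eq_top.mpr h] at h1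
  rw [finrank_top] at h1
  simp only [Module.finrank_pi, Fintype.card_fin] at h1
  omega

lemma const_le_ker {ι : Type*} {F : Set (ι → ℝ)} (f : (ι → ℝ) →ₗ[ℝ] ℝ) (c : ℝ)
    (h : ∀ x ∈ F, f x = c) : vectorSpan ℝ F ≤ LinearMap.ker f := by
  rw [vectorSpan_def, Submodule.span_le]
  rintro u ⟨x, hx, y, hy, rfl⟩
  simp only [SetLike.mem_coe, LinearMap.mem_ker, vsub_eq_sub, map_sub]
  rw [h x hx, h y hy, sub_self]

variable {m n : ℕ} (le : Fin m → Fin m → Prop)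
  (hrefl : ∀ i, le i i) (hantisymm : ∀ i j, le i j → le j i → i = j)
  (htrans : ∀ i j k, le i j → le j k → le i k)

open scoped Classical in
include hrefl hantisymm htrans in
lemma single_mem_vectorSpan (j : Fin m) :
    Pi.single j.succ (1:ℝ) ∈ vectorSpan ℝ (orderPolytope m le) := by
  classical
  set u : Fin (m+1) → ℝ := Fin.cons 1 (fun k => if le k j then 1 else 0) with hu
  set w : Fin (m+1) → ℝ := Fin.cons 1 (fun k => if le k j ∧ k ≠ j then 1 else 0) with hw
  have hum : u ∈ orderPolytope m le := by
    refine ⟨by simp [hu], ?_, ?_, ?_⟩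
    · intro a; induction a using Fin.cases with
      | zero => simp [hu]
      | succ k => simp only [hu, Fin.cons_succ]; positivity
    · intro k; simp only [hu, Fin.cons_succ, Fin.cons_zero]; split <;> norm_num
    · intro a b hab
      simp only [hu, Fin.cons_succ]
      split <;> split <;> norm_num
      next h1 h2 => exact h2 (htrans a b j hab h1)
  have hwm : w ∈ orderPolytope m le := by
    refine ⟨by simp [hw], ?_, ?_, ?_⟩
    · intro a; induction a using Fin.cases with
      | zero => simp [hw]
      | succ k => simp only [hw, Fin.cons_succ]; positivity
    · intro k; simp only [hw, Fin.cons_succ, Fin.cons_zero]; split <;> norm_num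
    · intro a b hab
      simp only [hw, Fin.cons_succ]
      split <;> split <;> norm_num
      next h1 h2 =>
        exact h2 ⟨htrans a b j hab h1.1, fun haj => h1.2 (hantisymm b j h1.1 (haj ▸ hab))⟩
  have key : Pi.single j.succ (1:ℝ) = u - w := by
    funext t
    induction t using Fin.cases with
    | zero => simp [hu, hw, Pi.single_apply, Fin.succ_ne_zero]
    | succ k =>
      simp only [Pi.sub_apply, hu, hw, Fin.cons_succ, Pi.single_apply]
      by_cases hkj : k = j
      · subst hkj; simp [hrefl k]
      · have : ¬ (k.succ = j.succ) := fun h => hkj (Fin.succ_injective m h)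
        simp only [this, if_false]
        by_cases h2 : le k j <;> simp [h2, hkj]
  rw [key]
  exact vsub_mem_vectorSpan ℝ hum hwm

include hrefl hantisymm htrans in
lemma pdim_orderPolytope (hm : 1 ≤ m) : pdim (orderPolytope m le) = m := by
  classical
  have hup : vectorSpan ℝ (orderPolytope m le) ≤ LinearMap.ker (LinearMap.proj 0 :
      (Fin (m+1) → ℝ) →ₗ[ℝ] ℝ) := by
    apply const_le_ker _ 1
    intro x hx
    exact hx.1
  have hksurj : Function.Surjective (LinearMap.pi (fun _ : Fin 1 => (LinearMap.proj 0 :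
      (Fin (m+1) → ℝ) →ₗ[ℝ] ℝ))) := by
    intro y
    refine ⟨fun _ => y 0, ?_⟩
    funext t
    fin_cases t
    rfl
  have hker : Module.finrank ℝ (LinearMap.ker (LinearMap.pi (fun _ : Fin 1 =>
      (LinearMap.proj 0 : (Fin (m+1) → ℝ) →ₗ[ℝ] ℝ)))) + 1 = m + 1 := by
    have := finrank_ker_surj _ hksurj
    simpa using this
  have hkereq : LinearMap.ker (LinearMap.pi (fun _ : Fin 1 =>
      (LinearMap.proj 0 : (Fin (m+1) → ℝ) →ₗ[ℝ] ℝ))) =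
      LinearMap.ker (LinearMap.proj 0 : (Fin (m+1) → ℝ) →ₗ[ℝ] ℝ) := by
    ext x
    simp [LinearMap.pi_apply, funext_iff, Fin.forall_fin_one]
  rw [hkereq] at hker
  have hub : pdim (orderPolytope m le) ≤ m := by
    have := Submodule.finrank_mono hup
    unfold pdim
    omega
  -- lower bound
  have hli : LinearIndependent ℝ (fun j : Fin m => (Pi.single j.succ 1 : Fin (m+1) → ℝ)) := by
    have hb := (Pi.basisFun ℝ (Fin (m+1))).linearIndependent
    have heq : (fun j : Fin m => (Pi.single j.succ 1 : Fin (m+1) → ℝ)) =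
        (Pi.basisFun ℝ (Fin (m+1))) ∘ Fin.succ := by
      funext j
      simp [Function.comp]
    rw [heq]
    exact hb.comp _ (Fin.succ_injective m)
  have hspan : Submodule.span ℝ (Set.range (fun j : Fin m => (Pi.single j.succ 1 : Fin (m+1) → ℝ))) ≤
      vectorSpan ℝ (orderPolytope m le) := by
    rw [Submodule.span_le]
    rintro u ⟨j, rfl⟩
    exact single_mem_vectorSpan le hrefl hantisymm htrans j
  have hlow : m ≤ pdim (orderPolytope m le) := by
    have h1 : Module.finrank ℝ (Submodule.span ℝ
        (Set.range (fun j : Fin m => (Pi.single j.succ 1 : Fin (m+1) → ℝ)))) = m := by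
      rw [finrank_span_eq_card hli, Fintype.card_fin]
    have := Submodule.finrank_mono hspan
    unfold pdim
    omega
  omega

end

section
open Finset

variable {m : ℕ}

/-- Index type for the defining constraints of the order polytope. -/
abbrev OPIdx (m : ℕ) := Fin (m+1) ⊕ (Fin m ⊕ Fin m × Fin m)

open scoped Classical in
/-- Slack of constraint `s` at point `z`. -/
noncomputable def opSlack (le : Fin m → Fin m → Prop) (s : OPIdx m) (z : Fin (m+1) → ℝ) : ℝ :=
  match s with
  | .inl a => z a
  | .inr (.inl j) => z 0 - z j.succ
  | .inr (.inr (i, j)) => if le i j ∧ i ≠ j then z i.succ - z j.succ else 1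

variable {le : Fin m → Fin m → Prop}

lemma opSlack_nonneg {x : Fin (m+1) → ℝ} (hx : x ∈ orderPolytope m le) (s : OPIdx m) :
    0 ≤ opSlack le s x := by
  obtain ⟨h0, hnn, hle1, hord⟩ := hx
  rcases s with a | j | ⟨i, j⟩
  · exact hnn a
  · simp only [opSlack]; linarith [hle1 j]
  · simp only [opSlack]
    split
    next h => linarith [hord i j h.1]
    next => norm_num

lemma opSlack_mid {x y : Fin (m+1) → ℝ} (s : OPIdx m) :
    opSlack le s ((1/2 : ℝ) • (x + y)) = (opSlack le s x + opSlack le s y) / 2 := by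
  rcases s with a | j | ⟨i, j⟩ <;> simp only [opSlack, Pi.smul_apply, Pi.add_apply, smul_eq_mul]
  · ring
  · ring
  · split <;> ring

lemma mid_mem_orderPolytope {x y : Fin (m+1) → ℝ} (hx : x ∈ orderPolytope m le)
    (hy : y ∈ orderPolytope m le) : (1/2 : ℝ) • (x + y) ∈ orderPolytope m le := by
  obtain ⟨h0, hnn, hle1, hord⟩ := hx
  obtain ⟨h0', hnn', hle1', hord'⟩ := hy
  refine ⟨?_, ?_, ?_, ?_⟩
  · simp [h0, h0']; norm_num
  · intro a; simp only [Pi.smul_apply, Pi.add_apply, smul_eq_mul]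
    have := hnn a; have := hnn' a; linarith
  · intro j; simp only [Pi.smul_apply, Pi.add_apply, smul_eq_mul]
    have := hle1 j; have := hle1' j; linarith
  · intro i j h; simp only [Pi.smul_apply, Pi.add_apply, smul_eq_mul]
    have := hord i j h; have := hord' i j h; linarith

lemma exists_all_strict (f : (Fin (m+1) → ℝ) →ₗ[ℝ] ℝ) (c : ℝ)
    (hFne : ∃ x ∈ orderPolytope m le, f x = c)
    (hstr : ∀ s : OPIdx m, ∃ x, (x ∈ orderPolytope m le ∧ f x = c) ∧ 0 < opSlack le s x) :
    ∃ z, (z ∈ orderPolytope m le ∧ f z = c) ∧ ∀ s : OPIdx m, 0 < opSlack le s z := by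
  classical
  suffices h : ∀ t : Finset (OPIdx m), ∃ z, (z ∈ orderPolytope m le ∧ f z = c) ∧
      ∀ s ∈ t, 0 < opSlack le s z by
    obtain ⟨z, hz1, hz2⟩ := h Finset.univ
    exact ⟨z, hz1, fun s => hz2 s (Finset.mem_univ s)⟩
  intro t
  induction t using Finset.induction with
  | empty =>
    obtain ⟨x, hx, hfx⟩ := hFne
    exact ⟨x, ⟨hx, hfx⟩, by simp⟩
  | insert s t hnotmem ih =>
    obtain ⟨z, ⟨hz, hfz⟩, hzs⟩ := ih
    obtain ⟨w, ⟨hw, hfw⟩, hws⟩ := hstr s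
    refine ⟨(1/2 : ℝ) • (z + w), ⟨mid_mem_orderPolytope hz hw, ?_⟩, ?_⟩
    · simp only [map_smul, map_add, smul_eq_mul, hfz, hfw]; ring
    · intro s' hs'
      rw [opSlack_mid]
      rcases Finset.mem_insert.mp hs' with rfl | hs't
      · have := opSlack_nonneg hz s'
        linarith
      · have h1 := hzs s' hs't
        have h2 := opSlack_nonneg hw s'
        linarith

lemma interior_forces (f : (Fin (m+1) → ℝ) →ₗ[ℝ] ℝ) (c : ℝ)
    (hfc : ∀ x ∈ orderPolytope m le, f x ≤ c)
    (z : Fin (m+1) → ℝ) (hz : z ∈ orderPolytope m le) (hfz : f z = c)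
    (hstrict : ∀ s : OPIdx m, 0 < opSlack le s z) :
    ∀ x ∈ orderPolytope m le, f x = c := by
  classical
  intro x hx
  set δ : ℝ := (Finset.univ : Finset (OPIdx m)).inf' (⟨Sum.inl 0, Finset.mem_univ _⟩ : (Finset.univ : Finset (OPIdx m)).Nonempty)
    (fun s => opSlack le s z) with hδ
  have hδpos : 0 < δ := by
    rw [hδ]; apply (Finset.lt_inf'_iff _).mpr
    intro s _
    exact hstrict s
  have hδle : ∀ s : OPIdx m, δ ≤ opSlack le s z := by
    intro s
    exact Finset.inf'_le _ (Finset.mem_univ s)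
  have hz0 : z 0 = 1 := hz.1
  have hδ1 : δ ≤ 1 := by
    have := hδle (Sum.inl 0)
    simpa [opSlack, hz0] using this
  set ε : ℝ := δ / 2 with hε
  have hεpos : 0 < ε := by positivity
  set y : Fin (m+1) → ℝ := z + ε • (z - x) with hy
  have hbz := box_of_mem le hz
  have hbx := box_of_mem le hx
  have hx0 : x 0 = 1 := hx.1
  have hym : y ∈ orderPolytope m le := by
    refine ⟨?_, ?_, ?_, ?_⟩
    · simp [hy, hz0, hx0]
    · intro a
      have h1 := hδle (Sum.inl a)
      simp only [opSlack] at h1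
      have h2 := (hbx a).2
      simp only [hy, Pi.add_apply, Pi.smul_apply, Pi.sub_apply, smul_eq_mul]
      nlinarith
    · intro j
      have h1 := hδle (Sum.inr (Sum.inl j))
      simp only [opSlack, hz0] at h1
      have h2 := (hbx j.succ).1
      simp only [hy, Pi.add_apply, Pi.smul_apply, Pi.sub_apply, smul_eq_mul, hz0, hx0]
      nlinarith
    · intro i j hij
      by_cases hije : i = j
      · subst hije; exact le_refl _
      · have h1 := hδle (Sum.inr (Sum.inr (i, j)))
        simp only [opSlack, if_pos (And.intro hij hije)] at h1
        have h2 := (hbx i.succ).2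
        have h3 := (hbx j.succ).1
        simp only [hy, Pi.add_apply, Pi.smul_apply, Pi.sub_apply, smul_eq_mul]
        nlinarith
  have hfy := hfc y hym
  have hfyeq : f y = c + ε * (c - f x) := by
    simp only [hy, map_add, map_smul, map_sub, smul_eq_mul, hfz]
  rw [hfyeq] at hfy
  have : c ≤ f x := by nlinarith
  exact le_antisymm (hfc x hx) this

end

section
open Finset Module

lemma card_ne_aux (n t : ℕ) (ht : t < n) :
    Nat.card {k : Fin n // (k : ℕ) ≠ t} = n - 1 := by
  classical
  rw [Nat.card_eq_fintype_card]
  have h1 : Fintype.card {k : Fin n // (k : ℕ) = t} = 1 := by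
    rw [Fintype.card_eq_one_iff]
    refine ⟨⟨⟨t, ht⟩, rfl⟩, ?_⟩
    rintro ⟨y, hy⟩
    exact Subtype.ext (Fin.ext hy)
  have h2 := Fintype.card_subtype_compl (fun k : Fin n => (k : ℕ) = t)
  rw [h1, Fintype.card_fin] at h2
  convert h2 using 2

lemma facet_eq_count {m n : ℕ} (le : Fin m → Fin m → Prop) (rk : Fin m → ℕ)
    (F : Set (Fin (m+1) → ℝ)) (f : (Fin (m+1) → ℝ) →ₗ[ℝ] ℝ) (c : ℝ)
    (hFeq : F = {x ∈ orderPolytope m le | f x = c})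
    (hFne : F.Nonempty)
    (hdim : pdim F + 1 = pdim (orderPolytope m le))
    (hPdim : pdim (orderPolytope m le) = m)
    (hvmem : ∀ k : Fin n, idealVec m n rk k ∈ orderPolytope m le)
    (g : (Fin (m+1) → ℝ) →ₗ[ℝ] ℝ)
    (hgF : ∀ x ∈ F, g x = 0)
    (hsurj : Function.Surjective
      (LinearMap.pi ![(LinearMap.proj 0 : (Fin (m+1) → ℝ) →ₗ[ℝ] ℝ), g]))
    (t : ℕ) (ht : t < n)
    (hvg : ∀ k : Fin n, g (idealVec m n rk k) = 0 ↔ (k : ℕ) ≠ t) :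
    Nat.card {k : Fin n // idealVec m n rk k ∈ F} = n - 1 := by
  classical
  set P := orderPolytope m le with hP
  set G : Set (Fin (m+1) → ℝ) := {x ∈ P | g x = 0} with hG
  have hFP : F ⊆ P := by rw [hFeq]; intro x hx; exact hx.1
  have hFG : F ⊆ G := by
    intro x hx
    exact ⟨hFP hx, hgF x hx⟩
  set Φ := LinearMap.pi ![(LinearMap.proj 0 : (Fin (m+1) → ℝ) →ₗ[ℝ] ℝ), g] with hΦ
  have hkerΦ : LinearMap.ker Φ =
      LinearMap.ker (LinearMap.proj 0 : (Fin (m+1) → ℝ) →ₗ[ℝ] ℝ) ⊓ LinearMap.ker g := by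
    ext x
    simp [hΦ, LinearMap.pi_apply, funext_iff, Fin.forall_fin_two]
  have hGker : vectorSpan ℝ G ≤ LinearMap.ker Φ := by
    rw [hkerΦ]
    refine le_inf ?_ ?_
    · exact const_le_ker _ 1 (fun x hx => hx.1.1)
    · exact const_le_ker _ 0 (fun x hx => hx.2)
  have hrk := finrank_ker_surj Φ hsurj
  rw [Fintype.card_fin] at hrk
  have hGrk := Submodule.finrank_mono hGker
  have hspan_le : vectorSpan ℝ F ≤ vectorSpan ℝ G := vectorSpan_mono ℝ hFG
  have hspan_eq : vectorSpan ℝ F = vectorSpan ℝ G := by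
    refine Submodule.eq_of_le_of_finrank_le hspan_le ?_
    unfold pdim at hdim hPdim
    omega
  have hGF : G ⊆ F := by
    obtain ⟨p, hpF⟩ := hFne
    intro x hxG
    have hpG : p ∈ G := hFG hpF
    have hsub : x -ᵥ p ∈ vectorSpan ℝ G := vsub_mem_vectorSpan ℝ hxG hpG
    rw [← hspan_eq] at hsub
    have hf0 : f (x - p) = 0 := by
      have hker := const_le_ker (F := F) f c (fun y hy => by rw [hFeq] at hy; exact hy.2)
      have := hker hsub
      simpa [vsub_eq_sub] using this
    have hfp : f p = c := by rw [hFeq] at hpF; exact hpF.2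
    have hfx : f x = c := by
      rw [map_sub] at hf0; linarith
    rw [hFeq]
    exact ⟨hxG.1, hfx⟩
  have hFGeq : F = G := Set.Subset.antisymm hFG hGF
  have hiff : ∀ k : Fin n, (idealVec m n rk k ∈ F ↔ (k : ℕ) ≠ t) := by
    intro k
    rw [hFGeq]
    constructor
    · intro h; exact (hvg k).mp h.2
    · intro h; exact ⟨hvmem k, (hvg k).mpr h⟩
  rw [Nat.card_congr (Equiv.subtypeEquivRight hiff)]
  exact card_ne_aux n t ht

end

lemma if_one_eq_zero_iff (P : Prop) [Decidable P] : ((if P then (1:ℝ) else 0) = 0 ↔ ¬ P) := by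
  split_ifs with h <;> simp [h]

/-- For a graded poset `Ω` of rank `n - 2` on `{1, …, m}`, the characteristic vectors of
the rank ideals of `Ω⁰` are vertices of the order polytope `O(Ω)` and every facet of
`O(Ω)` contains exactly `n - 1` of them: they span a special simplex. -/
theorem rank_ideals_special_simplex {m n : ℕ} (hm : 1 ≤ m) (hn : 2 ≤ n)
    (le : Fin m → Fin m → Prop)
    (hrefl : ∀ i, le i i)
    (hantisymm : ∀ i j, le i j → le j i → i = j)
    (htrans : ∀ i j k, le i j → le j k → le i k)
    (rk : Fin m → ℕ)
    (hmin : ∀ i, (∀ j, le j i → j = i) → rk i = 0)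
    (hmax : ∀ i, (∀ j, le i j → j = i) → rk i = n - 2)
    (hcov : ∀ i j, le i j → i ≠ j → (∀ c, le i c → le c j → c = i ∨ c = j) →
      rk j = rk i + 1) :
    (∀ i : Fin n, idealVec m n rk i ∈ Set.extremePoints ℝ (orderPolytope m le)) ∧
    ∀ F, IsFacetOf F (orderPolytope m le) →
      Nat.card {i : Fin n // idealVec m n rk i ∈ F} = n - 1 := by
  classical
  have rk_lt : ∀ i j, le i j → i ≠ j → rk i < rk j := by
    intro i j hij hne
    refine rk_strict_mono le hrefl hantisymm htrans rk hcov m i j ?_ hij hne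
    calc (Finset.univ.filter fun c => le i c ∧ le c j).card
        ≤ (Finset.univ : Finset (Fin m)).card := Finset.card_filter_le _ _
      _ = m := by simp
  have hrkb : ∀ i, rk i ≤ n - 2 := rk_le_bound le hrefl htrans rk rk_lt hmax
  have hvmem : ∀ k : Fin n, idealVec m n rk k ∈ orderPolytope m le :=
    fun k => idealVec_mem le rk rk_lt k
  have hPdim := pdim_orderPolytope le hrefl hantisymm htrans hm
  constructor
  · intro k
    refine extreme_of_01 _ (fun x hx => box_of_mem le hx) _ (hvmem k) ?_
    intro tt
    induction tt using Fin.cases with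
    | zero => right; simp [idealVec]
    | succ j =>
      simp only [idealVec, Fin.cons_succ]
      split
      · right; rfl
      · left; rfl
  · rintro F ⟨hface, hFne, hFneP, hdim⟩
    rcases hface with rfl | ⟨f, c, hfle, hFeq⟩
    · exact absurd rfl hFneP
    have hFP : ∀ x ∈ F, x ∈ orderPolytope m le ∧ f x = c := by
      intro x hx; rwa [hFeq] at hx
    by_cases H1 : ∃ a : Fin m, ∀ x ∈ F, x a.succ = 0
    · obtain ⟨a, ha⟩ := H1
      by_cases hamax : ∀ j, le a j → j = a
      · -- facet x_{a+1} = 0, a maximal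
        have hrka : rk a = n - 2 := hmax a hamax
        refine facet_eq_count le rk F f c hFeq hFne hdim hPdim hvmem
          (LinearMap.proj a.succ) (fun x hx => ha x hx) ?_ (n - 1) (by omega) ?_
        · intro y
          refine ⟨y 0 • (Pi.single 0 1 : Fin (m+1) → ℝ) + y 1 • (Pi.single a.succ 1 : Fin (m+1) → ℝ), ?_⟩
          funext s
          fin_cases s <;>
            simp [LinearMap.pi_apply, Pi.single_apply, (Fin.succ_ne_zero a).symm]
        · intro k
          have hk := k.isLt
          simp only [LinearMap.proj_apply, idealVec, Fin.cons_succ, hrka,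
            if_one_eq_zero_iff]
          omega
      · -- a not maximal: contradiction with codimension one
        exfalso
        push_neg at hamax
        obtain ⟨b, hab, hba⟩ := hamax
        have hbF : ∀ x ∈ F, x b.succ = 0 := by
          intro x hx
          obtain ⟨hxP, -⟩ := hFP x hx
          have h1 := hxP.2.2.2 a b hab
          have h2 := hxP.2.1 b.succ
          have h3 := ha x hx
          linarith
        set Φ := LinearMap.pi ![(LinearMap.proj 0 : (Fin (m+1) → ℝ) →ₗ[ℝ] ℝ),
          LinearMap.proj a.succ, LinearMap.proj b.succ] with hΦ
        have hsurj : Function.Surjective Φ := by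
          intro y
          refine ⟨y 0 • (Pi.single 0 1 : Fin (m+1) → ℝ) + y 1 • (Pi.single a.succ 1 : Fin (m+1) → ℝ) + y 2 • (Pi.single b.succ 1 : Fin (m+1) → ℝ), ?_⟩
          funext s
          fin_cases s <;>
            simp [hΦ, LinearMap.pi_apply, Pi.single_apply, (Fin.succ_ne_zero a).symm,
              (Fin.succ_ne_zero b).symm, Fin.succ_inj, hba, Ne.symm hba]
        have hker : vectorSpan ℝ F ≤ LinearMap.ker Φ := by
          intro u hu
          have h1 := const_le_ker (F := F) (LinearMap.proj 0) 1
            (fun x hx => (hFP x hx).1.1) hu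
          have h2 := const_le_ker (F := F) (LinearMap.proj a.succ) 0 ha hu
          have h3 := const_le_ker (F := F) (LinearMap.proj b.succ) 0 hbF hu
          simp only [LinearMap.mem_ker, LinearMap.proj_apply] at h1 h2 h3 ⊢
          funext s
          fin_cases s <;> simp [hΦ, LinearMap.pi_apply, h1, h2, h3]
        have hk3 := finrank_ker_surj Φ hsurj
        have hmono := Submodule.finrank_mono hker
        unfold pdim at hdim hPdim
        simp only [Fintype.card_fin] at hk3
        omega
    by_cases H2 : ∃ j : Fin m, ∀ x ∈ F, x j.succ = 1
    · obtain ⟨j, hj⟩ := H2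
      have hjF0 : ∀ x ∈ F, x 0 - x j.succ = 0 := by
        intro x hx
        rw [hj x hx, (hFP x hx).1.1, sub_self]
      by_cases hjmin : ∀ i, le i j → i = j
      · -- facet x0 = x_{j+1}, j minimal
        have hrkj : rk j = 0 := hmin j hjmin
        set g : (Fin (m+1) → ℝ) →ₗ[ℝ] ℝ := (LinearMap.proj 0 : (Fin (m+1) → ℝ) →ₗ[ℝ] ℝ) - (LinearMap.proj j.succ : (Fin (m+1) → ℝ) →ₗ[ℝ] ℝ) with hgdef
        have hgF : ∀ x ∈ F, g x = 0 := by
          intro x hx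
          rw [hgdef, LinearMap.sub_apply, LinearMap.proj_apply, LinearMap.proj_apply]
          exact hjF0 x hx
        refine facet_eq_count le rk F f c hFeq hFne hdim hPdim hvmem
          g hgF ?_ 0 (by omega) ?_
        · intro y
          refine ⟨y 0 • (Pi.single 0 1 : Fin (m+1) → ℝ) + (y 0 - y 1) • (Pi.single j.succ 1 : Fin (m+1) → ℝ), ?_⟩
          funext s
          fin_cases s <;>
            simp [hgdef, LinearMap.pi_apply, LinearMap.sub_apply, LinearMap.proj_apply,
              Pi.single_apply, (Fin.succ_ne_zero j).symm]
        · intro k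
          simp only [hgdef, LinearMap.sub_apply, LinearMap.proj_apply, idealVec, Fin.cons_zero,
            Fin.cons_succ, hrkj]
          split_ifs with h
          · norm_num; omega
          · norm_num; omega
      · -- j not minimal: contradiction
        exfalso
        push_neg at hjmin
        obtain ⟨i0, hi0j, hi0⟩ := hjmin
        have hi0F : ∀ x ∈ F, x i0.succ = 1 := by
          intro x hx
          obtain ⟨hxP, -⟩ := hFP x hx
          have h1 := hxP.2.2.2 i0 j hi0j
          have h2 := hxP.2.2.1 i0
          have h3 := hj x hx
          have h4 := hxP.1
          linarith
        set Φ := LinearMap.pi ![(LinearMap.proj 0 : (Fin (m+1) → ℝ) →ₗ[ℝ] ℝ),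
          LinearMap.proj j.succ, LinearMap.proj i0.succ] with hΦ
        have hsurj : Function.Surjective Φ := by
          intro y
          refine ⟨y 0 • (Pi.single 0 1 : Fin (m+1) → ℝ) + y 1 • (Pi.single j.succ 1 : Fin (m+1) → ℝ) + y 2 • (Pi.single i0.succ 1 : Fin (m+1) → ℝ), ?_⟩
          funext s
          fin_cases s <;>
            simp [hΦ, LinearMap.pi_apply, Pi.single_apply, (Fin.succ_ne_zero j).symm,
              (Fin.succ_ne_zero i0).symm, Fin.succ_inj, hi0, Ne.symm hi0]
        have hker : vectorSpan ℝ F ≤ LinearMap.ker Φ := by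
          intro u hu
          have h1 := const_le_ker (F := F) (LinearMap.proj 0) 1
            (fun x hx => (hFP x hx).1.1) hu
          have h2 := const_le_ker (F := F) (LinearMap.proj j.succ) 1 hj hu
          have h3 := const_le_ker (F := F) (LinearMap.proj i0.succ) 1 hi0F hu
          simp only [LinearMap.mem_ker, LinearMap.proj_apply] at h1 h2 h3 ⊢
          funext s
          fin_cases s <;> simp [hΦ, LinearMap.pi_apply, h1, h2, h3]
        have hk3 := finrank_ker_surj Φ hsurj
        have hmono := Submodule.finrank_mono hker
        unfold pdim at hdim hPdim
        simp only [Fintype.card_fin] at hk3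
        omega
    by_cases H3 : ∃ p : Fin m × Fin m, le p.1 p.2 ∧ p.1 ≠ p.2 ∧
        ∀ x ∈ F, x p.1.succ = x p.2.succ
    · obtain ⟨⟨i, j⟩, hij, hne, hijF⟩ := H3
      have hijF0 : ∀ x ∈ F, x i.succ - x j.succ = 0 := by
        intro x hx; rw [hijF x hx, sub_self]
      have hsne : i.succ ≠ j.succ := fun h => hne (Fin.succ_injective m h)
      by_cases hcover : ∀ c, le i c → le c j → c = i ∨ c = j
      · -- facet x_{i+1} = x_{j+1}, i covered by j
        have hrkj : rk j = rk i + 1 := hcov i j hij hne hcover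
        set g : (Fin (m+1) → ℝ) →ₗ[ℝ] ℝ := (LinearMap.proj i.succ : (Fin (m+1) → ℝ) →ₗ[ℝ] ℝ) - (LinearMap.proj j.succ : (Fin (m+1) → ℝ) →ₗ[ℝ] ℝ)
          with hgdef
        have hgF : ∀ x ∈ F, g x = 0 := by
          intro x hx
          rw [hgdef, LinearMap.sub_apply, LinearMap.proj_apply, LinearMap.proj_apply]
          exact hijF0 x hx
        refine facet_eq_count le rk F f c hFeq hFne hdim hPdim hvmem
          g hgF ?_
          (rk i + 1) (by have := hrkb i; omega) ?_
        · intro y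
          refine ⟨y 0 • (Pi.single 0 1 : Fin (m+1) → ℝ) + (- y 1) • (Pi.single j.succ 1 : Fin (m+1) → ℝ), ?_⟩
          funext s
          fin_cases s <;>
            simp [hgdef, LinearMap.pi_apply, LinearMap.sub_apply, LinearMap.proj_apply,
              Pi.single_apply, (Fin.succ_ne_zero i).symm,
              (Fin.succ_ne_zero j).symm, hsne, Ne.symm hsne]
        · intro k
          have hk := k.isLt
          simp only [hgdef, LinearMap.sub_apply, LinearMap.proj_apply, idealVec, Fin.cons_succ,
            hrkj]
          split_ifs with h1 h2 <;> simp <;> omega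
      · -- not a cover: contradiction
        exfalso
        push_neg at hcover
        obtain ⟨c0, hic0, hc0j, hc0⟩ := hcover
        have hc0i : c0 ≠ i := hc0.1
        have hc0j' : c0 ≠ j := hc0.2
        have hicF : ∀ x ∈ F, x i.succ - x c0.succ = 0 := by
          intro x hx
          obtain ⟨hxP, -⟩ := hFP x hx
          have h1 := hxP.2.2.2 i c0 hic0
          have h2 := hxP.2.2.2 c0 j hc0j
          have h3 := hijF x hx
          linarith
        set g2 : (Fin (m+1) → ℝ) →ₗ[ℝ] ℝ := (LinearMap.proj i.succ : (Fin (m+1) → ℝ) →ₗ[ℝ] ℝ) - (LinearMap.proj j.succ : (Fin (m+1) → ℝ) →ₗ[ℝ] ℝ)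
          with hg2
        set g3 : (Fin (m+1) → ℝ) →ₗ[ℝ] ℝ := (LinearMap.proj i.succ : (Fin (m+1) → ℝ) →ₗ[ℝ] ℝ) - (LinearMap.proj c0.succ : (Fin (m+1) → ℝ) →ₗ[ℝ] ℝ)
          with hg3
        have hg2F : ∀ x ∈ F, g2 x = 0 := by
          intro x hx
          rw [hg2, LinearMap.sub_apply, LinearMap.proj_apply, LinearMap.proj_apply]
          exact hijF0 x hx
        have hg3F : ∀ x ∈ F, g3 x = 0 := by
          intro x hx
          rw [hg3, LinearMap.sub_apply, LinearMap.proj_apply, LinearMap.proj_apply]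
          exact hicF x hx
        set Φ := LinearMap.pi ![(LinearMap.proj 0 : (Fin (m+1) → ℝ) →ₗ[ℝ] ℝ), g2, g3] with hΦ
        have hsic : i.succ ≠ c0.succ := fun h => hc0i (Fin.succ_injective m h).symm
        have hsjc : j.succ ≠ c0.succ := fun h => hc0j' (Fin.succ_injective m h).symm
        have hsurj : Function.Surjective Φ := by
          intro y
          refine ⟨y 0 • (Pi.single 0 1 : Fin (m+1) → ℝ) + (- y 1) • (Pi.single j.succ 1 : Fin (m+1) → ℝ)
            + (- y 2) • (Pi.single c0.succ 1 : Fin (m+1) → ℝ), ?_⟩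
          funext s
          fin_cases s <;>
            simp [hΦ, hg2, hg3, LinearMap.pi_apply, LinearMap.sub_apply, LinearMap.proj_apply,
              Pi.single_apply, (Fin.succ_ne_zero i).symm,
              (Fin.succ_ne_zero j).symm, (Fin.succ_ne_zero c0).symm, hsne, Ne.symm hsne,
              hsic, Ne.symm hsic, hsjc, Ne.symm hsjc]
        have hker : vectorSpan ℝ F ≤ LinearMap.ker Φ := by
          intro u hu
          have h1 := const_le_ker (F := F) (LinearMap.proj 0) 1
            (fun x hx => (hFP x hx).1.1) hu
          have h2 := const_le_ker (F := F) g2 0 hg2F hu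
          have h3 := const_le_ker (F := F) g3 0 hg3F hu
          simp only [LinearMap.mem_ker, LinearMap.proj_apply] at h1 h2 h3 ⊢
          funext s
          fin_cases s <;> simp [hΦ, LinearMap.pi_apply, h1, h2, h3]
        have hk3 := finrank_ker_surj Φ hsurj
        have hmono := Submodule.finrank_mono hker
        unfold pdim at hdim hPdim
        simp only [Fintype.card_fin] at hk3
        omega
    · -- no defining inequality is tight on all of F : F = P, contradiction
      exfalso
      push_neg at H1 H2 H3
      obtain ⟨p0, hp0⟩ := hFne
      have hp0' := hFP p0 hp0
      have hstr : ∀ s : OPIdx m, ∃ x, (x ∈ orderPolytope m le ∧ f x = c) ∧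
          0 < opSlack le s x := by
        intro s
        rcases s with a | jj | ⟨i, j⟩
        · induction a using Fin.cases with
          | zero =>
            exact ⟨p0, hp0', by simp [opSlack, hp0'.1.1]⟩
          | succ a' =>
            obtain ⟨x, hxF, hxa⟩ := H1 a'
            have hx' := hFP x hxF
            have := hx'.1.2.1 a'.succ
            refine ⟨x, hx', ?_⟩
            simp only [opSlack]
            rcases lt_or_eq_of_le this with h | h
            · exact h
            · exact absurd h.symm hxa
        · obtain ⟨x, hxF, hxj⟩ := H2 jj
          have hx' := hFP x hxF
          have h1 := (box_of_mem le hx'.1 jj.succ).2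
          refine ⟨x, hx', ?_⟩
          simp only [opSlack, hx'.1.1]
          rcases lt_or_eq_of_le h1 with h | h
          · linarith
          · exact absurd h hxj
        · by_cases hc : le i j ∧ i ≠ j
          · obtain ⟨x, hxF, hxij⟩ := H3 (i, j) hc.1 hc.2
            have hx' := hFP x hxF
            have h1 := hx'.1.2.2.2 i j hc.1
            refine ⟨x, hx', ?_⟩
            simp only [opSlack, if_pos hc]
            rcases lt_or_eq_of_le h1 with h | h
            · linarith
            · exact absurd h.symm hxij
          · exact ⟨p0, hp0', by simp [opSlack, if_neg hc]⟩
      obtain ⟨z, ⟨hzP, hzf⟩, hzs⟩ := exists_all_strict f c ⟨p0, hp0'.1, hp0'.2⟩ hstr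
      have hall := interior_forces f c hfle z hzP hzf hzs
      apply hFneP
      rw [hFeq]
      ext x
      exact ⟨fun hx => hx.1, fun hx => ⟨hx, hall x hx⟩⟩
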